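/- Let Θ be a finite set, p̃ a probability mass function on Θ, and Θ_0 ⊆ Θ. Let θ ∈ Θ_0 and θ' ∉ Θ_0 with p̃_{θ'} ≤ p̃_θ, and let Θ_0' = (Θ_0 \ {θ}) ∪ {θ'}. Then for every T ≥ 0, the expected number of known elements after T i.i.d. draws from p̃ satisfies E[|Θ_0' ∪ {X_1,…,X_T}|] ≥ E[|Θ_0 ∪ {X_1,…,X_T}|]; that is, initially knowing the rarer element yields at least as large an expected knowledge base at every time. -/

import Mathlib

open Finset

lemma aux_sum_prod {Θ : Type*} [Fintype Θ] (f : Θ → ℝ) (T : ℕ) :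
    ∑ x : Fin T → Θ, ∏ i, f (x i) = (∑ a, f a) ^ T := by
  rw [Finset.sum_pow' Finset.univ f T, Fintype.piFinset_univ]

theorem knowing_rare_elements_is_better
    {Θ : Type*} [Fintype Θ] [DecidableEq Θ]
    (p : Θ → ℝ) (hp : ∀ θ, 0 ≤ p θ) (hsum : ∑ θ, p θ = 1)
    (Θ0 : Finset Θ) (θ θ' : Θ) (hθ : θ ∈ Θ0) (hθ' : θ' ∉ Θ0)
    (hle : p θ' ≤ p θ) (T : ℕ) :
    ∑ x : Fin T → Θ, (∏ i, p (x i)) *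
        ((Θ0 ∪ Finset.image x Finset.univ).card : ℝ)
      ≤ ∑ x : Fin T → Θ, (∏ i, p (x i)) *
          ((((Θ0 \ {θ}) ∪ {θ'}) ∪ Finset.image x Finset.univ).card : ℝ) := by
  have hθ'e : θ' ∉ Θ0.erase θ := fun h => hθ' (Finset.mem_of_mem_erase h)
  -- card decomposition
  have key : ∀ A : Finset Θ,
      ((((Θ0 \ {θ}) ∪ {θ'}) ∪ A).card : ℝ)
        = ((Θ0 ∪ A).card : ℝ)
          + (if θ' ∈ A then 0 else 1) - (if θ ∈ A then 0 else 1) := by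
    intro A
    have hcard : ∀ S : Finset Θ, ((S ∪ A).card : ℝ)
        = (A.card : ℝ) + ∑ a ∈ S, (if a ∈ A then (0:ℝ) else 1) := by
      intro S
      have h1 : (S ∪ A).card = (S \ A).card + A.card :=
        (Finset.card_sdiff_add_card S A).symm
      have h2 : S \ A = S.filter (· ∉ A) := by
        ext a; simp [Finset.mem_sdiff]
      have h3 : ((S.filter (· ∉ A)).card : ℝ)
          = ∑ a ∈ S, (if a ∈ A then (0:ℝ) else 1) := by
        rw [Finset.card_filter]
        push_cast
        exact Finset.sum_congr rfl fun a _ => by by_cases h : a ∈ A <;> simp [h]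
      rw [h1, h2]
      push_cast
      rw [h3]; ring
    rw [hcard, hcard]
    have e1 : (Θ0 \ {θ}) ∪ {θ'} = insert θ' (Θ0.erase θ) := by
      rw [Finset.sdiff_singleton_eq_erase, Finset.union_comm]
      simp [Finset.insert_eq, -Finset.singleton_union]
    have e2 : Θ0 = insert θ (Θ0.erase θ) := (Finset.insert_erase hθ).symm
    rw [e1, Finset.sum_insert hθ'e]
    nth_rewrite 2 [e2]
    rw [Finset.sum_insert (Finset.notMem_erase θ Θ0)]
    ring
  simp only [key]
  have expand : ∀ b : Θ,
      ∑ x : Fin T → Θ, (∏ i, p (x i)) *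
        (if b ∈ Finset.image x Finset.univ then (0:ℝ) else 1)
      = (1 - p b) ^ T := by
    intro b
    have : ∀ x : Fin T → Θ, (∏ i, p (x i)) *
        (if b ∈ Finset.image x Finset.univ then (0:ℝ) else 1)
        = ∏ i, (if x i = b then 0 else p (x i)) := by
      intro x
      by_cases h : b ∈ Finset.image x Finset.univ
      · obtain ⟨i, -, hi⟩ := Finset.mem_image.mp h
        simp only [h, if_true, mul_zero]
        exact (Finset.prod_eq_zero (Finset.mem_univ i) (by simp [hi])).symm
      · simp only [h, if_false, mul_one]
        refine Finset.prod_congr rfl fun i _ => ?_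
        have : x i ≠ b := fun hc => h (Finset.mem_image.mpr ⟨i, Finset.mem_univ i, hc⟩)
        simp [this]
    simp only [this]
    rw [aux_sum_prod (fun a => if a = b then 0 else p a)]
    congr 1
    have : ∀ a : Θ, (if a = b then (0:ℝ) else p a)
        = p a - (if a = b then p a else 0) := by
      intro a; by_cases h : a = b <;> simp [h]
    simp only [this]
    rw [Finset.sum_sub_distrib, hsum, Finset.sum_ite_eq' Finset.univ b p]
    simp
  have hsplit : ∀ x : Fin T → Θ,
      (∏ i, p (x i)) *
        (((Θ0 ∪ Finset.image x Finset.univ).card : ℝ)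
          + (if θ' ∈ Finset.image x Finset.univ then (0:ℝ) else 1)
          - (if θ ∈ Finset.image x Finset.univ then (0:ℝ) else 1))
      = (∏ i, p (x i)) * ((Θ0 ∪ Finset.image x Finset.univ).card : ℝ)
        + (∏ i, p (x i)) * (if θ' ∈ Finset.image x Finset.univ then (0:ℝ) else 1)
        - (∏ i, p (x i)) * (if θ ∈ Finset.image x Finset.univ then (0:ℝ) else 1) := by
    intro x; ring
  simp only [hsplit]
  rw [Finset.sum_sub_distrib, Finset.sum_add_distrib, expand, expand]
  have h1 : p θ ≤ 1 := hsum ▸ Finset.single_le_sum (fun a _ => hp a) (Finset.mem_univ θ)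
  have : (1 - p θ) ^ T ≤ (1 - p θ') ^ T :=
    pow_le_pow_left₀ (by linarith) (by linarith) T
  linarith
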